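/- Suppose ⟨λ_i⟩_{i∈I} ↠ ⟨κ_i⟩_{i∈I}, and j ∈ I is an index such that λ_j is the maximum of ⟨λ_i⟩_{i∈I} and κ_j is the maximum of ⟨κ_i⟩_{i∈I}. Let λ′ be a cardinal with λ′ > λ_j and let κ′ be a cardinal with sup_{i≠j} κ_i ≤ κ′ < κ_j. Then the sequences obtained by replacing the j-th entries, namely {(j,λ′)} ∪ ⟨λ_i⟩_{i≠j} and {(j,κ′)} ∪ ⟨κ_i⟩_{i≠j}, satisfy {(j,λ′)} ∪ ⟨λ_i⟩_{i≠j} ↠ {(j,κ′)} ∪ ⟨κ_i⟩_{i≠j}. -/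

import Mathlib

open Cardinal

universe u

/-- `⟨λ_i⟩_{i∈I} ↠ ⟨κ_i⟩_{i∈I}`: letting `λ = sup_{i∈I} λ_i` (cardinals identified with
their initial ordinals), for every `f : λ^{<ω} → λ` there is `X ⊆ λ` with
`f''(X^{<ω}) ⊆ X` such that `|X ∩ λ_i| = κ_i` for every `i ∈ I`. -/
def ChangSeq {I : Type u} (lam kap : I → Cardinal.{u}) : Prop :=
  ∀ f : List Ordinal.{u} → Ordinal.{u},
    (∀ l : List Ordinal.{u}, (∀ x ∈ l, x < (⨆ i, lam i).ord) → f l < (⨆ i, lam i).ord) →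
    ∃ X : Set Ordinal.{u}, X ⊆ Set.Iio (⨆ i, lam i).ord ∧
      (∀ l : List Ordinal.{u}, (∀ x ∈ l, x ∈ X) → f l ∈ X) ∧
      ∀ i, #(↥(X ∩ Set.Iio (lam i).ord)) = Cardinal.lift.{u + 1} (kap i)

open Set

namespace ChangAux

variable (f : List Ordinal.{u} → Ordinal.{u})

def closN (S : Set Ordinal.{u}) : ℕ → Set Ordinal.{u}
  | 0 => S
  | n+1 => closN S n ∪ (fun l => f l) '' {l : List Ordinal.{u} | ∀ x ∈ l, x ∈ closN S n}

def clos (S : Set Ordinal.{u}) : Set Ordinal.{u} := ⋃ n, closN f S n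

lemma closN_mono {S : Set Ordinal.{u}} : Monotone (closN f S) :=
  monotone_nat_of_le_succ fun _ => subset_union_left

lemma subset_clos (S : Set Ordinal.{u}) : S ⊆ clos f S :=
  subset_iUnion (closN f S) 0

lemma clos_closed {S : Set Ordinal.{u}} (l : List Ordinal.{u})
    (hl : ∀ x ∈ l, x ∈ clos f S) : f l ∈ clos f S := by
  have : ∃ n, ∀ x ∈ l, x ∈ closN f S n := by
    induction l with
    | nil => exact ⟨0, by simp⟩
    | cons a t ih =>
      obtain ⟨n, hn⟩ := ih fun x hx => hl x (List.mem_cons_of_mem _ hx)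
      obtain ⟨m, hm⟩ := mem_iUnion.1 (hl a (List.mem_cons_self))
      refine ⟨max n m, fun x hx => ?_⟩
      rcases List.mem_cons.1 hx with rfl | hx
      · exact closN_mono f (le_max_right n m) hm
      · exact closN_mono f (le_max_left n m) (hn x hx)
  obtain ⟨n, hn⟩ := this
  exact mem_iUnion.2 ⟨n + 1, Or.inr ⟨l, hn, rfl⟩⟩

lemma clos_min {S T : Set Ordinal.{u}} (hST : S ⊆ T)
    (hT : ∀ l, (∀ x ∈ l, x ∈ T) → f l ∈ T) : clos f S ⊆ T := by
  refine iUnion_subset fun n => ?_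
  induction n with
  | zero => exact hST
  | succ n ih =>
    rintro x (hx | ⟨l, hl, rfl⟩)
    · exact ih hx
    · exact hT l fun y hy => ih (hl y hy)

lemma mk_setOf_lists_le (A : Set Ordinal.{u}) :
    #{l : List Ordinal.{u} | ∀ x ∈ l, x ∈ A} ≤ #(List ↥A) := by
  have hsurj : Function.Surjective (fun l : List ↥A =>
      (⟨l.map Subtype.val, fun x hx => by
        obtain ⟨y, _, rfl⟩ := List.mem_map.1 hx; exact y.2⟩ :
        {l : List Ordinal.{u} | ∀ x ∈ l, x ∈ A})) := by
    rintro ⟨l, hl⟩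
    induction l with
    | nil => exact ⟨[], rfl⟩
    | cons a t ih =>
      obtain ⟨t', ht'⟩ := ih fun x hx => hl x (List.mem_cons_of_mem _ hx)
      refine ⟨⟨a, hl a (List.mem_cons_self)⟩ :: t', Subtype.ext ?_⟩
      have := congrArg Subtype.val ht'
      simpa using this
  exact mk_le_of_surjective hsurj

lemma mk_closN_le {S : Set Ordinal.{u}} (hS : ℵ₀ ≤ #S) (n : ℕ) :
    #(closN f S n) ≤ #S := by
  induction n with
  | zero => exact le_rfl
  | succ n ih =>
    have hinf : ℵ₀ ≤ #(closN f S n) :=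
      hS.trans (mk_le_mk_of_subset (closN_mono f (Nat.zero_le n)))
    have : Infinite ↥(closN f S n) := aleph0_le_mk_iff.1 hinf
    calc #(closN f S (n+1)) ≤ #(closN f S n) + #((fun l => f l) ''
          {l : List Ordinal.{u} | ∀ x ∈ l, x ∈ closN f S n}) := mk_union_le _ _
      _ ≤ #(closN f S n) + #{l : List Ordinal.{u} | ∀ x ∈ l, x ∈ closN f S n} :=
          add_le_add le_rfl (mk_image_le)
      _ ≤ #(closN f S n) + #(List ↥(closN f S n)) :=
          add_le_add le_rfl (mk_setOf_lists_le _)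
      _ = #(closN f S n) + #(closN f S n) := by rw [mk_list_eq_mk]
      _ = #(closN f S n) := add_eq_self hinf
      _ ≤ #S := ih

lemma mk_clos {S : Set Ordinal.{u}} (hS : ℵ₀ ≤ #S) : #(clos f S) = #S := by
  refine le_antisymm ?_ (mk_le_mk_of_subset (subset_clos f S))
  have hrw : clos f S = ⋃ n : ULift.{u+1} ℕ, closN f S n.down := by
    ext x
    simp only [clos, mem_iUnion]
    exact ⟨fun ⟨n, hn⟩ => ⟨⟨n⟩, hn⟩, fun ⟨n, hn⟩ => ⟨n.down, hn⟩⟩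
  rw [hrw]
  calc #(⋃ n : ULift.{u+1} ℕ, closN f S n.down)
      ≤ #(ULift.{u+1} ℕ) * ⨆ n : ULift.{u+1} ℕ, #(closN f S n.down) := mk_iUnion_le _
    _ ≤ ℵ₀ * #S := by
        refine mul_le_mul' (by simp) (ciSup_le' fun n => mk_closN_le f hS n.down)
    _ = max ℵ₀ #S := mul_eq_max le_rfl hS
    _ = #S := max_eq_right hS

end ChangAux

namespace ChangAux

open Ordinal in
lemma not_bddAbove_union_Ici (Y : Set Ordinal.{u}) (L : Ordinal.{u}) :
    ¬BddAbove (Y ∪ Ici L) := by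
  rintro ⟨x, hx⟩
  have h1 : max L (Order.succ x) ∈ Y ∪ Ici L := Or.inr (Set.mem_Ici.2 (le_max_left _ _))
  have h2 := hx h1
  exact absurd ((le_max_right L (Order.succ x)).trans h2) (Order.lt_succ x).not_ge

open Ordinal in
lemma enumOrd_id_of_le {s : Set Ordinal.{u}} (α : Ordinal.{u})
    (hα : ∀ β ≤ α, β ∈ s) : enumOrd s α = α := by
  induction α using Ordinal.induction with
  | h α IH =>
    rw [enumOrd]
    have hmem : α ∈ s ∩ { b | ∀ c, c < α → enumOrd s c < b } := by
      refine ⟨hα α le_rfl, fun c hc => ?_⟩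
      rw [IH c hc fun β hβ => hα β (hβ.trans hc.le)]
      exact hc
    refine le_antisymm (csInf_le' hmem) (le_csInf ⟨α, hmem⟩ fun b hb => ?_)
    by_contra hlt
    push_neg at hlt
    have := hb.2 b hlt
    rw [IH b hlt fun β hβ => hα β (hβ.trans hlt.le)] at this
    exact lt_irrefl b this

section Collapse

variable (Y : Set Ordinal.{u}) (L : Ordinal.{u})

/-- the increasing enumeration of `Y ∪ Ici L` -/
noncomputable def coll : Ordinal.{u} → Ordinal.{u} := Ordinal.enumOrd (Y ∪ Ici L)

/-- the order type of `Y` (when `Y ⊆ Iio L`) -/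
noncomputable def collLen : Ordinal.{u} := sInf {o | coll Y L o ∉ Y}

lemma coll_strictMono : StrictMono (coll Y L) :=
  Ordinal.enumOrd_strictMono (not_bddAbove_union_Ici Y L)

variable {Y L}

lemma collLen_nonempty (hY : Y ⊆ Iio L) : {o | coll Y L o ∉ Y}.Nonempty := by
  refine ⟨L, fun hmem => ?_⟩
  have h1 : L ≤ coll Y L L := (coll_strictMono Y L).le_apply
  exact absurd (hY hmem) (not_lt.2 h1)

lemma coll_mem {o : Ordinal.{u}} (hY : Y ⊆ Iio L) (ho : o < collLen Y L) :
    coll Y L o ∈ Y := by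
  by_contra hmem
  exact absurd (csInf_le' (s := {o | coll Y L o ∉ Y}) hmem) ho.not_ge

lemma coll_surj {y : Ordinal.{u}} (hY : Y ⊆ Iio L) (hy : y ∈ Y) :
    ∃ o < collLen Y L, coll Y L o = y := by
  obtain ⟨o, ho₀⟩ := Ordinal.enumOrd_surjective (not_bddAbove_union_Ici Y L) (Or.inl hy : y ∈ Y ∪ Ici L)
  have ho : coll Y L o = y := ho₀
  refine ⟨o, ?_, ho⟩
  by_contra hlt
  push_neg at hlt
  have h1 : coll Y L (collLen Y L) ∉ Y := csInf_mem (collLen_nonempty hY)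
  have h2 : coll Y L (collLen Y L) ∈ Y ∪ Ici L :=
    Ordinal.enumOrd_mem (not_bddAbove_union_Ici Y L) _
  have h3 : L ≤ coll Y L (collLen Y L) := h2.resolve_left h1
  have h4 : coll Y L (collLen Y L) ≤ coll Y L o := (coll_strictMono Y L).monotone hlt
  rw [ho] at h4
  exact absurd (hY hy) (not_lt.2 (h3.trans h4))

lemma mk_Iio_collLen (hY : Y ⊆ Iio L) : #(Iio (collLen Y L)) = #Y := by
  have hinj : Set.InjOn (coll Y L) (Iio (collLen Y L)) :=
    ((coll_strictMono Y L).injective).injOn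
  have himg : coll Y L '' Iio (collLen Y L) = Y := by
    ext y
    constructor
    · rintro ⟨o, ho, rfl⟩
      exact coll_mem hY ho
    · intro hy
      obtain ⟨o, ho, rfl⟩ := coll_surj hY hy
      exact ⟨o, ho, rfl⟩
  calc #(Iio (collLen Y L)) = #(coll Y L '' Iio (collLen Y L)) :=
        (Cardinal.mk_image_eq_of_injOn _ _ hinj).symm
    _ = #Y := by rw [himg]

lemma coll_id {α : Ordinal.{u}} (hα : ∀ β ≤ α, β ∈ Y) : coll Y L α = α :=
  enumOrd_id_of_le α fun β hβ => Or.inl (hα β hβ)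

end Collapse

end ChangAux

namespace ChangAux

/-- restriction of an equivalence between two ordinal intervals to a total function -/
noncomputable def bres {L M : Ordinal.{u}} (e : ↥(Iio L) ≃ ↥(Iio M)) :
    Ordinal.{u} → Ordinal.{u} :=
  fun o => if h : o < L then (e ⟨o, h⟩ : Ordinal.{u}) else 0

lemma bres_pos {L M : Ordinal.{u}} (e : ↥(Iio L) ≃ ↥(Iio M)) {o : Ordinal.{u}} (h : o < L) :
    bres e o = (e ⟨o, h⟩ : Ordinal.{u}) := dif_pos h

lemma bres_lt {L M : Ordinal.{u}} (e : ↥(Iio L) ≃ ↥(Iio M)) (hM : 0 < M) (o : Ordinal.{u}) :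
    bres e o < M := by
  unfold bres; split
  · exact (e ⟨o, _⟩).2
  · exact hM

lemma bres_bres {L M : Ordinal.{u}} (e : ↥(Iio L) ≃ ↥(Iio M)) {o : Ordinal.{u}} (h : o < L) :
    bres e.symm (bres e o) = o := by
  rw [bres_pos e h, bres_pos e.symm (e ⟨o, h⟩).2]
  have : (⟨(e ⟨o, h⟩ : Ordinal.{u}), (e ⟨o, h⟩).2⟩ : ↥(Iio M)) = e ⟨o, h⟩ := rfl
  rw [this, Equiv.symm_apply_apply]

/-- inverse of the collapse -/
noncomputable def cinv (c : Ordinal.{u} → Ordinal.{u}) (y : Ordinal.{u}) : Ordinal.{u} :=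
  sInf {o | c o = y}

lemma cinv_c {c : Ordinal.{u} → Ordinal.{u}} (hc : Function.Injective c) (o : Ordinal.{u}) :
    cinv c (c o) = o := by
  have : {o' | c o' = c o} = {o} := by
    ext o'
    simp only [Set.mem_setOf_eq, Set.mem_singleton_iff]
    exact ⟨fun ho' => hc ho', fun ho' => by rw [ho']⟩
  rw [cinv, this, csInf_singleton]

open Classical in
/-- the transported function -/
noncomputable def gfun (f : List Ordinal.{u} → Ordinal.{u}) (c ci : Ordinal.{u} → Ordinal.{u})
    (γ : Ordinal.{u}) : List Ordinal.{u} → Ordinal.{u} :=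
  fun l => if ∀ x ∈ l, x < γ then ci (f (l.map c)) else 0

open Classical in
/-- truncation of `bf` below `L` -/
noncomputable def vfun (L : Ordinal.{u}) (bf : Ordinal.{u} → Ordinal.{u}) :
    Ordinal.{u} → Ordinal.{u} :=
  fun o => if bf o < L then bf o else 0

open Classical in
/-- the master function combining `g` transported by `b` together with `b` and its inverse -/
noncomputable def Hfun (g : List Ordinal.{u} → Ordinal.{u})
    (bi bf v : Ordinal.{u} → Ordinal.{u}) : List Ordinal.{u} → Ordinal.{u}
  | [] => 0
  | [_] => bi (g [])
  | a :: x :: t => if a = 0 then (if t = [] then bi x else v x) else bi (g ((x :: t).map bf))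

section HfunLemmas
variable (g : List Ordinal.{u} → Ordinal.{u}) (bi bf v : Ordinal.{u} → Ordinal.{u})

lemma Hfun_nil : Hfun g bi bf v [] = 0 := rfl
lemma Hfun_single (a : Ordinal.{u}) : Hfun g bi bf v [a] = bi (g []) := rfl
lemma Hfun_u (x : Ordinal.{u}) : Hfun g bi bf v [0, x] = bi x := by
  simp [Hfun]
lemma Hfun_v (x y : Ordinal.{u}) (t : List Ordinal.{u}) :
    Hfun g bi bf v (0 :: x :: y :: t) = v x := by
  simp [Hfun]
lemma Hfun_t {a : Ordinal.{u}} (x : Ordinal.{u}) (t : List Ordinal.{u}) (ha : a ≠ 0) :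
    Hfun g bi bf v (a :: x :: t) = bi (g ((x :: t).map bf)) := by
  simp [Hfun, ha]

end HfunLemmas

end ChangAux

open ChangAux

/-- If `⟨λ_i⟩ ↠ ⟨κ_i⟩`, `λ_j` and `κ_j` are the maxima of the respective sequences,
`λ′ > λ_j`, and `sup_{i≠j} κ_i ≤ κ′ < κ_j`, then the sequences obtained by replacing the
`j`-th entries by `λ′` and `κ′` respectively again satisfy the Chang relation. -/
theorem changSeq_replace_max {I : Type u} [DecidableEq I] (lam kap : I → Cardinal.{u})
    (hlam : ∀ i, ℵ₀ ≤ lam i) (hkap : ∀ i, ℵ₀ ≤ kap i)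
    (h : ChangSeq lam kap) (j : I)
    (hlmax : ∀ i, lam i ≤ lam j) (hkmax : ∀ i, kap i ≤ kap j)
    (lam' kap' : Cardinal.{u}) (hkap' : ℵ₀ ≤ kap')
    (hl' : lam j < lam') (hk'le : ∀ i, i ≠ j → kap i ≤ kap') (hk'lt : kap' < kap j) :
    ChangSeq (Function.update lam j lam') (Function.update kap j kap') := by
  classical
  have hsup : (⨆ i, lam i) = lam j :=
    le_antisymm (ciSup_le' hlmax) (le_ciSup (Cardinal.bddAbove_range lam) j)
  have hlj' : lam j ≤ lam' := hl'.le
  have hsup' : (⨆ i, Function.update lam j lam' i) = lam' := by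
    refine le_antisymm (ciSup_le' fun i => ?_) ?_
    · rcases eq_or_ne i j with rfl | hij
      · rw [Function.update_self]
      · rw [Function.update_of_ne hij]; exact (hlmax i).trans hlj'
    · have := le_ciSup (Cardinal.bddAbove_range (Function.update lam j lam')) j
      rwa [Function.update_self] at this
  set Λ : Ordinal.{u} := (lam j).ord with hΛdef
  have hΛpos : 0 < Λ := by
    rw [hΛdef, ← Cardinal.ord_zero]
    exact Cardinal.ord_lt_ord.2 (aleph0_pos.trans_le (hlam j))
  have hmkIio : ∀ d : Cardinal.{u}, #(Iio d.ord) = Cardinal.lift.{u+1} d := by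
    intro d; rw [Ordinal.mk_Iio_ordinal, Cardinal.card_ord]
  unfold ChangSeq at h ⊢
  rw [hsup] at h
  rw [hsup']
  intro f hf
  -- the closure Y of Iio Λ under f
  set Y : Set Ordinal.{u} := clos f (Iio Λ) with hYdef
  have hIioΛY : Iio Λ ⊆ Y := subset_clos f _
  have hΛlam' : Λ ≤ lam'.ord := Cardinal.ord_le_ord.2 hlj'
  have hYsub : Y ⊆ Iio lam'.ord :=
    clos_min f (fun x hx => lt_of_lt_of_le hx hΛlam') hf
  have hYmk : #Y = Cardinal.lift.{u+1} (lam j) := by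
    rw [hYdef, mk_clos f (by rw [hΛdef, hmkIio]; exact Cardinal.aleph0_le_lift.2 (hlam j)),
      hΛdef, hmkIio]
  -- the collapse of Y
  set c : Ordinal.{u} → Ordinal.{u} := coll Y lam'.ord with hcdef
  set γ : Ordinal.{u} := collLen Y lam'.ord with hγdef
  have hcinj : Function.Injective c := (coll_strictMono Y lam'.ord).injective
  have hcid : ∀ {α : Ordinal.{u}}, α < Λ → c α = α := fun {α} hα =>
    coll_id fun β hβ => hIioΛY (lt_of_le_of_lt hβ hα)
  have hcY : ∀ {o : Ordinal.{u}}, o < γ → c o ∈ Y := fun {o} ho => coll_mem hYsub ho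
  have hΛγ : Λ ≤ γ := by
    by_contra hlt
    push_neg at hlt
    have h1 : c γ ∉ Y := csInf_mem (collLen_nonempty hYsub)
    have h2 : c γ ∈ Y := by rw [hcid hlt]; exact hIioΛY hlt
    exact h1 h2
  have hγpos : 0 < γ := lt_of_lt_of_le hΛpos hΛγ
  have hγmk : #(Iio γ) = Cardinal.lift.{u+1} (lam j) := by
    rw [hγdef, mk_Iio_collLen hYsub, hYmk]
  -- a bijection b between Iio Λ and Iio γ
  obtain ⟨b⟩ : Nonempty (↥(Iio Λ) ≃ ↥(Iio γ)) := by
    rw [← Cardinal.eq, hγmk, hΛdef, hmkIio]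
  set bf : Ordinal.{u} → Ordinal.{u} := bres b with hbfdef
  set bi : Ordinal.{u} → Ordinal.{u} := bres b.symm with hbidef
  set v : Ordinal.{u} → Ordinal.{u} := vfun Λ bf with hvdef
  have hbf_lt : ∀ o, bf o < γ := bres_lt b hγpos
  have hbi_lt : ∀ o, bi o < Λ := bres_lt b.symm hΛpos
  have hbibf : ∀ {o : Ordinal.{u}}, o < Λ → bi (bf o) = o := fun {o} ho => bres_bres b ho
  have hbfbi : ∀ {o : Ordinal.{u}}, o < γ → bf (bi o) = o := fun {o} ho => by
    have := bres_bres b.symm ho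
    rwa [Equiv.symm_symm] at this
  have hv_lt : ∀ o, v o < Λ := by
    intro o
    rw [hvdef, vfun]
    split
    · assumption
    · exact hΛpos
  -- the transported function g and the master function H
  set ci : Ordinal.{u} → Ordinal.{u} := cinv c with hcidef
  have hciY : ∀ y ∈ Y, c (ci y) = y ∧ ci y < γ := by
    intro y hy
    obtain ⟨o, ho, hco⟩ := coll_surj hYsub hy
    have hne : {o' | c o' = y}.Nonempty := ⟨o, hco⟩
    have hmem := csInf_mem hne
    exact ⟨hmem, lt_of_le_of_lt (csInf_le' (show o ∈ {o' | c o' = y} from hco)) ho⟩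
  set g : List Ordinal.{u} → Ordinal.{u} := gfun f c ci γ with hgdef
  have hfY : ∀ l : List Ordinal.{u}, (∀ x ∈ l, x < γ) → f (l.map c) ∈ Y := by
    intro l hl
    refine clos_closed f _ fun x hx => ?_
    obtain ⟨o, ho, rfl⟩ := List.mem_map.1 hx
    exact hcY (hl o ho)
  have hg : ∀ l : List Ordinal.{u}, (∀ x ∈ l, x < γ) →
      g l < γ ∧ c (g l) = f (l.map c) := by
    intro l hl
    have h1 := hciY _ (hfY l hl)
    rw [hgdef, gfun, if_pos hl]
    exact ⟨h1.2, h1.1⟩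
  set H : List Ordinal.{u} → Ordinal.{u} := Hfun g bi bf v with hHdef
  have hHlt : ∀ l, H l < Λ := by
    intro l
    match l with
    | [] => exact hΛpos
    | [a] => exact hbi_lt _
    | a :: x :: t =>
      rcases eq_or_ne a 0 with rfl | ha
      · rcases t with _ | ⟨y, t⟩
        · rw [hHdef, Hfun_u]; exact hbi_lt _
        · rw [hHdef, Hfun_v]; exact hv_lt _
      · rw [hHdef, Hfun_t (ha := ha)]; exact hbi_lt _
  -- apply the original Chang property
  obtain ⟨X₀, hX₀sub, hX₀cl, hX₀card⟩ := h H fun l _ => hHlt l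
  rw [← hΛdef] at hX₀sub
  have hX₀mk : #X₀ = Cardinal.lift.{u+1} (kap j) := by
    have h1 := hX₀card j
    rwa [← hΛdef, inter_eq_self_of_subset_left hX₀sub] at h1
  -- choose the cut point ρ₀
  set ρ₀ : Ordinal.{u} := sInf {ρ : Ordinal.{u} | Cardinal.lift.{u+1} kap' ≤ #(↥(X₀ ∩ Iio ρ))}
    with hρdef
  have hρne : {ρ : Ordinal.{u} | Cardinal.lift.{u+1} kap' ≤ #(↥(X₀ ∩ Iio ρ))}.Nonempty := by
    refine ⟨Λ, ?_⟩
    rw [mem_setOf_eq, inter_eq_self_of_subset_left hX₀sub, hX₀mk]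
    exact Cardinal.lift_le.2 hk'lt.le
  have hρmem : Cardinal.lift.{u+1} kap' ≤ #(↥(X₀ ∩ Iio ρ₀)) := csInf_mem hρne
  have hρmin : ∀ ρ < ρ₀, #(↥(X₀ ∩ Iio ρ)) < Cardinal.lift.{u+1} kap' := by
    intro ρ hρ
    by_contra hle
    push_neg at hle
    exact absurd (csInf_le' (s := {ρ : Ordinal.{u} | Cardinal.lift.{u+1} kap' ≤ #(↥(X₀ ∩ Iio ρ))}) hle) hρ.not_ge
  set Z : Set Ordinal.{u} := X₀ ∩ Iio ρ₀ with hZdef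
  have hZΛ : Z ⊆ Iio Λ := fun x hx => hX₀sub hx.1
  -- claim A : Z has cardinality exactly κ'
  have hZmk : #Z = Cardinal.lift.{u+1} kap' := by
    refine le_antisymm ?_ hρmem
    by_contra hlt
    push_neg at hlt
    have hIioA : #(Iio (collLen Z Λ)) = #Z := mk_Iio_collLen hZΛ
    have hklt : kap'.ord < collLen Z Λ := by
      by_contra hle
      push_neg at hle
      have := mk_le_mk_of_subset (Iio_subset_Iio hle)
      rw [hIioA, hmkIio] at this
      exact absurd (hlt.trans_le this) (lt_irrefl _)
    set x : Ordinal.{u} := coll Z Λ kap'.ord with hxdef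
    have hxZ : x ∈ Z := coll_mem hZΛ hklt
    have himg : coll Z Λ '' Iio kap'.ord ⊆ X₀ ∩ Iio x := by
      rintro _ ⟨o, ho, rfl⟩
      exact ⟨(coll_mem hZΛ (ho.trans hklt)).1, coll_strictMono Z Λ ho⟩
    have h2 : Cardinal.lift.{u+1} kap' ≤ #(↥(X₀ ∩ Iio x)) := by
      have h3 : #(coll Z Λ '' Iio kap'.ord) = #(Iio kap'.ord) :=
        Cardinal.mk_image_eq (coll_strictMono Z Λ).injective
      rw [← hmkIio kap', ← h3]
      exact mk_le_mk_of_subset himg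
    exact absurd h2 (hρmin x hxZ.2).not_ge
  -- claim B : Z meets each Iio (lam i).ord (i ≠ j) in exactly κ_i points
  have hZcard : ∀ i, i ≠ j → #(↥(Z ∩ Iio (lam i).ord)) = Cardinal.lift.{u+1} (kap i) := by
    intro i hij
    rcases le_or_gt (lam i).ord ρ₀ with hle | hlt
    · have hset : Z ∩ Iio (lam i).ord = X₀ ∩ Iio (lam i).ord := by
        rw [hZdef, inter_assoc, inter_eq_self_of_subset_right (Iio_subset_Iio hle)]
      rw [hset]
      exact hX₀card i
    · have hsub : Z ⊆ X₀ ∩ Iio (lam i).ord :=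
        fun y hy => ⟨hy.1, hy.2.trans hlt⟩
      have h1 : Cardinal.lift.{u+1} kap' ≤ Cardinal.lift.{u+1} (kap i) := by
        rw [← hZmk, ← hX₀card i]
        exact mk_le_mk_of_subset hsub
      have h2 : kap i = kap' := le_antisymm (hk'le i hij) (Cardinal.lift_le.1 h1)
      have hset : Z ∩ Iio (lam i).ord = Z := inter_eq_self_of_subset_left
        fun y hy => hy.2.trans hlt
      rw [hset, hZmk, h2]
  -- the closure X' of Z under H
  set X' : Set Ordinal.{u} := clos H Z with hX'def
  have hX'X₀ : X' ⊆ X₀ := clos_min H inter_subset_left hX₀cl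
  have hX'Λ : X' ⊆ Iio Λ := hX'X₀.trans hX₀sub
  have hZX' : Z ⊆ X' := subset_clos H Z
  have hX'cl : ∀ l : List Ordinal.{u}, (∀ x ∈ l, x ∈ X') → H l ∈ X' :=
    fun l hl => clos_closed H l hl
  have hX'mk : #X' = Cardinal.lift.{u+1} kap' := by
    rw [hX'def, mk_clos H (by rw [hZmk]; exact Cardinal.aleph0_le_lift.2 hkap'), hZmk]
  have hX'cardi : ∀ i, i ≠ j → #(↥(X' ∩ Iio (lam i).ord)) = Cardinal.lift.{u+1} (kap i) := by
    intro i hij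
    refine le_antisymm ?_ ?_
    · rw [← hX₀card i]
      exact mk_le_mk_of_subset (inter_subset_inter_left _ hX'X₀)
    · rw [← hZcard i hij]
      exact mk_le_mk_of_subset (inter_subset_inter_left _ hZX')
  have h0X' : (0 : Ordinal.{u}) ∈ X' := by
    have h1 := hX'cl [] (by simp)
    rwa [hHdef, Hfun_nil] at h1
  obtain ⟨a₀, ha₀X, ha₀ne⟩ : ∃ a ∈ X', a ≠ 0 := by
    by_contra hcon
    push_neg at hcon
    have hsub : X' ⊆ {0} := fun x hx => hcon x hx
    have h1 : #X' ≤ 1 := by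
      have h2 := mk_le_mk_of_subset hsub
      rwa [Cardinal.mk_singleton] at h2
    rw [hX'mk] at h1
    have h3 : (ℵ₀ : Cardinal.{u+1}) ≤ 1 := (Cardinal.aleph0_le_lift.2 hkap').trans h1
    exact absurd h3 (by simp)
  -- closure of X' under the coded maps
  have hbiX' : ∀ a ∈ X', bi a ∈ X' := by
    intro a ha
    have h1 := hX'cl [0, a] (by
      intro x hx
      simp only [List.mem_cons, List.not_mem_nil, or_false] at hx
      rcases hx with rfl | rfl
      exacts [h0X', ha])
    rwa [hHdef, Hfun_u] at h1
  have hvX' : ∀ a ∈ X', v a ∈ X' := by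
    intro a ha
    have h1 := hX'cl [0, a, a] (by
      intro x hx
      simp only [List.mem_cons, List.not_mem_nil, or_false] at hx
      rcases hx with rfl | rfl | rfl
      exacts [h0X', ha, ha])
    rwa [hHdef, Hfun_v] at h1
  -- the image X of X' under b
  set X : Set Ordinal.{u} := bf '' X' with hXdef
  have hK1 : X' ⊆ X := fun a ha =>
    ⟨bi a, hbiX' a ha, hbfbi (lt_of_lt_of_le (hX'Λ ha) hΛγ)⟩
  have hK2 : X ∩ Iio Λ ⊆ X' := by
    rintro y ⟨⟨x, hx, rfl⟩, hyΛ⟩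
    have hv : v x = bf x := by
      rw [hvdef]; unfold vfun; rw [if_pos (show bf x < Λ from hyΛ)]
    have h1 := hvX' x hx
    rwa [hv] at h1
  have hXγ : X ⊆ Iio γ := by rintro y ⟨x, _, rfl⟩; exact hbf_lt x
  have hXmk : #X = Cardinal.lift.{u+1} kap' := by
    have hinjOn : InjOn bf X' := by
      intro x hx y hy hxy
      have h1 : bi (bf x) = bi (bf y) := by rw [hxy]
      rwa [hbibf (hX'Λ hx), hbibf (hX'Λ hy)] at h1
    rw [hXdef, Cardinal.mk_image_eq_of_injOn _ _ hinjOn, hX'mk]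
  have hXcap : ∀ i, i ≠ j → X ∩ Iio (lam i).ord = X' ∩ Iio (lam i).ord := by
    intro i hij
    have hordle : (lam i).ord ≤ Λ := Cardinal.ord_le_ord.2 (hlmax i)
    ext y
    constructor
    · rintro ⟨hyX, hylt⟩
      exact ⟨hK2 ⟨hyX, lt_of_lt_of_le hylt hordle⟩, hylt⟩
    · rintro ⟨hyX', hylt⟩
      exact ⟨hK1 hyX', hylt⟩
  -- X is closed under g
  have hXg : ∀ l : List Ordinal.{u}, (∀ x ∈ l, x ∈ X) → g l ∈ X := by
    intro l hl
    have hlγ : ∀ x ∈ l, x < γ := fun x hx => hXγ (hl x hx)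
    have hglγ := hg l hlγ
    have hbi_mem : ∀ x ∈ l, bi x ∈ X' := by
      intro x hx
      obtain ⟨z, hz, rfl⟩ := hl x hx
      rw [hbibf (hX'Λ hz)]
      exact hz
    have hmap : (l.map bi).map bf = l := by
      rw [List.map_map]
      have h1 : ∀ x ∈ l, (bf ∘ bi) x = id x := fun x hx => hbfbi (hlγ x hx)
      rw [List.map_congr_left h1, List.map_id]
    have hkey : bi (g l) ∈ X' := by
      cases l with
      | nil =>
        have h1 := hX'cl [a₀] (by
          intro x hx
          simp only [List.mem_cons, List.not_mem_nil, or_false] at hx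
          rw [hx]; exact ha₀X)
        rwa [hHdef, Hfun_single] at h1
      | cons y t =>
        have hmem : ∀ x ∈ a₀ :: (y :: t).map bi, x ∈ X' := by
          intro x hx
          rcases List.mem_cons.1 hx with rfl | hx
          · exact ha₀X
          · obtain ⟨z, hz, rfl⟩ := List.mem_map.1 hx
            exact hbi_mem z hz
        have h1 := hX'cl (a₀ :: (y :: t).map bi) hmem
        rw [hHdef, show (y :: t).map bi = bi y :: t.map bi from rfl,
          Hfun_t (ha := ha₀ne),
          show bi y :: List.map bi t = (y :: t).map bi from rfl, hmap] at h1
        exact h1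
    exact ⟨bi (g l), hkey, hbfbi hglγ.1⟩
  -- the final set Xf
  set Xf : Set Ordinal.{u} := c '' X with hXfdef
  have hXfY : Xf ⊆ Y := by rintro y ⟨o, ho, rfl⟩; exact hcY (hXγ ho)
  have hXfsub : Xf ⊆ Iio lam'.ord := fun y hy => hYsub (hXfY hy)
  have hXfmk : #Xf = Cardinal.lift.{u+1} kap' := by
    rw [hXfdef, Cardinal.mk_image_eq hcinj, hXmk]
  have hXfcl : ∀ l : List Ordinal.{u}, (∀ x ∈ l, x ∈ Xf) → f l ∈ Xf := by
    intro l hl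
    have hl₀ : ∀ x ∈ l.map ci, x ∈ X := by
      intro x hx
      obtain ⟨y, hy, rfl⟩ := List.mem_map.1 hx
      obtain ⟨o, ho, rfl⟩ := hl y hy
      rw [show ci (c o) = o from cinv_c hcinj o]
      exact ho
    have hmapc : (l.map ci).map c = l := by
      rw [List.map_map]
      have h1 : ∀ x ∈ l, (c ∘ ci) x = id x := by
        intro x hx
        obtain ⟨o, _, rfl⟩ := hl x hx
        show c (cinv c (c o)) = c o
        rw [cinv_c hcinj o]
      rw [List.map_congr_left h1, List.map_id]
    have hgX := hXg (l.map ci) hl₀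
    have hgl := hg (l.map ci) fun x hx => hXγ (hl₀ x hx)
    refine ⟨g (l.map ci), hgX, ?_⟩
    rw [hgl.2, hmapc]
  refine ⟨Xf, hXfsub, hXfcl, ?_⟩
  intro i
  rcases eq_or_ne i j with rfl | hij
  · rw [Function.update_self, Function.update_self,
      inter_eq_self_of_subset_left hXfsub, hXfmk]
  · rw [Function.update_of_ne hij, Function.update_of_ne hij]
    have hordle : (lam i).ord ≤ Λ := Cardinal.ord_le_ord.2 (hlmax i)
    have hset : Xf ∩ Iio (lam i).ord = X' ∩ Iio (lam i).ord := by
      ext y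
      constructor
      · rintro ⟨⟨o, ho, rfl⟩, hlt⟩
        have hoΛ : o < Λ :=
          lt_of_le_of_lt (coll_strictMono Y lam'.ord).le_apply (lt_of_lt_of_le hlt hordle)
        have hco : c o = o := hcid hoΛ
        rw [hco] at hlt ⊢
        have hXi : o ∈ X ∩ Iio (lam i).ord := ⟨ho, hlt⟩
        rw [hXcap i hij] at hXi
        exact hXi
      · rintro ⟨hyX', hylt⟩
        have hyΛ : y < Λ := lt_of_lt_of_le hylt hordle
        exact ⟨⟨y, hK1 hyX', hcid hyΛ⟩, hylt⟩
    rw [hset]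
    exact hX'cardi i hij
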